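/- Let G(z) = p(z)⁻² Σᵢ Σⱼ χᵢ(z)χⱼ(z) Σ⁻¹(μⱼ−μᵢ)μⱼᵀΣ⁻¹ be the Gaussian-mixture correction matrix, where χᵢ(z) = wⁱ N(z; μᵢ, Σ). Then G(z) can be rewritten as the symmetric form G(z) = p(z)⁻² Σᵢ Σ_{j>i} χᵢχⱼ Σ⁻¹(μⱼ−μᵢ)(μⱼ−μᵢ)ᵀΣ⁻¹, and in particular G(z) is positive semidefinite. -/

import Mathlib

open Matrix MeasureTheory

/-- Density of the multivariate Gaussian `N(μ, S)` on `ℝᵐ`. -/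
noncomputable def gaussPdf {m : ℕ} (μ : Fin m → ℝ) (S : Matrix (Fin m) (Fin m) ℝ)
    (z : Fin m → ℝ) : ℝ :=
  (Real.sqrt ((2 * Real.pi) ^ m * S.det))⁻¹ *
    Real.exp (-(1 / 2) * ((z - μ) ⬝ᵥ (S⁻¹ *ᵥ (z - μ))))

lemma gaussPdf_nonneg' {m : ℕ} (μ : Fin m → ℝ) (S : Matrix (Fin m) (Fin m) ℝ)
    (z : Fin m → ℝ) : 0 ≤ gaussPdf μ S z := by
  unfold gaussPdf; positivity

lemma posSemidef_vecMulVec' {m : ℕ} (v : Fin m → ℝ) : (vecMulVec v v).PosSemidef := by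
  refine Matrix.PosSemidef.of_dotProduct_mulVec_nonneg ?_ ?_
  · ext i j
    simp [vecMulVec, mul_comm]
  · intro x
    have h : star x ⬝ᵥ (vecMulVec v v *ᵥ x) = (v ⬝ᵥ x) * (v ⬝ᵥ x) := by
      simp [dotProduct, mulVec, vecMulVec, Finset.sum_mul, Finset.mul_sum]
      ring_nf
      rw [Finset.sum_comm]
      apply Finset.sum_congr rfl; intro i _; apply Finset.sum_congr rfl; intro j _; ring
    rw [h]
    exact mul_self_nonneg _

lemma posSemidef_smul_real {n : Type*} [Fintype n] {M : Matrix n n ℝ}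
    (hM : M.PosSemidef) {c : ℝ} (hc : 0 ≤ c) : (c • M).PosSemidef := by
  refine Matrix.PosSemidef.of_dotProduct_mulVec_nonneg ?_ ?_
  · show (c • M)ᴴ = c • M
    rw [conjTranspose_smul, hM.1.eq, star_trivial]
  · intro x
    rw [smul_mulVec, dotProduct_smul]
    exact mul_nonneg hc (hM.dotProduct_mulVec_nonneg x)

lemma double_sum_split {M : Type*} [AddCommMonoid M] {N : ℕ} (F : Fin N → Fin N → M)
    (hdiag : ∀ i, F i i = 0) :
    ∑ i, ∑ j, F i j
      = ∑ i, ∑ j ∈ Finset.univ.filter (fun j => i < j), (F i j + F j i) := by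
  have h1 : ∀ i : Fin N, ∑ j, F i j
      = ∑ j ∈ Finset.univ.filter (fun j => i < j), F i j
        + ∑ j ∈ Finset.univ.filter (fun j => j < i), F i j := by
    intro i
    rw [← Finset.sum_filter_add_sum_filter_not Finset.univ (fun j => i < j)]
    congr 1
    refine (Finset.sum_subset ?_ ?_).symm
    · intro x hx
      simp only [Finset.mem_filter, Finset.mem_univ, true_and] at hx ⊢
      exact not_lt_of_gt hx
    · intro x hx hx2
      simp only [Finset.mem_filter, Finset.mem_univ, true_and, not_lt] at hx hx2
      have : x = i := le_antisymm hx hx2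
      rw [this]; exact hdiag i
  calc ∑ i, ∑ j, F i j
      = ∑ i, ∑ j ∈ Finset.univ.filter (fun j => i < j), F i j
        + ∑ i, ∑ j ∈ Finset.univ.filter (fun j => j < i), F i j := by
        rw [← Finset.sum_add_distrib]; exact Finset.sum_congr rfl fun i _ => h1 i
    _ = ∑ i, ∑ j ∈ Finset.univ.filter (fun j => i < j), F i j
        + ∑ j, ∑ i ∈ Finset.univ.filter (fun i => j < i), F i j := by
        congr 1
        exact Finset.sum_comm' (fun x y => by simp)
    _ = ∑ i, ∑ j ∈ Finset.univ.filter (fun j => i < j), (F i j + F j i) := by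
        rw [← Finset.sum_add_distrib]
        exact Finset.sum_congr rfl fun i _ => (Finset.sum_add_distrib).symm

theorem gmm_correction_symmetric_posSemidef {m N : ℕ} (w : Fin N → ℝ)
    (μ : Fin N → Fin m → ℝ) (S : Matrix (Fin m) (Fin m) ℝ)
    (hw : ∀ i, 0 < w i) (hsum : ∑ i, w i = 1) (hS : S.PosDef) (z : Fin m → ℝ)
    (p : (Fin m → ℝ) → ℝ) (hp : p = fun z => ∑ i, w i * gaussPdf (μ i) S z)
    (χ : Fin N → ℝ) (hχ : χ = fun i => w i * gaussPdf (μ i) S z)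
    (G : Matrix (Fin m) (Fin m) ℝ)
    (hG : G = ((p z) ^ 2)⁻¹ •
        ∑ i, ∑ j, (χ i * χ j) • (S⁻¹ * vecMulVec (μ j - μ i) (μ j) * S⁻¹)) :
    G = ((p z) ^ 2)⁻¹ •
        ∑ i, ∑ j ∈ Finset.univ.filter (fun j => i < j),
          (χ i * χ j) • (S⁻¹ * vecMulVec (μ j - μ i) (μ j - μ i) * S⁻¹) ∧
      G.PosSemidef := by
  have hχ0 : ∀ i, 0 ≤ χ i := by
    intro i; rw [hχ]
    exact mul_nonneg (hw i).le (gaussPdf_nonneg' _ _ _)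
  have hSinv : (S⁻¹).IsHermitian := hS.1.inv
  -- the symmetric rewriting
  have key : (∑ i, ∑ j, (χ i * χ j) • (S⁻¹ * vecMulVec (μ j - μ i) (μ j) * S⁻¹))
      = ∑ i, ∑ j ∈ Finset.univ.filter (fun j => i < j),
          (χ i * χ j) • (S⁻¹ * vecMulVec (μ j - μ i) (μ j - μ i) * S⁻¹) := by
    rw [double_sum_split (fun i j => (χ i * χ j) • (S⁻¹ * vecMulVec (μ j - μ i) (μ j) * S⁻¹))
      (by intro i; simp only [sub_self]; rw [show vecMulVec (0 : Fin m → ℝ) (μ i) = 0 by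
        ext a b; simp [vecMulVec]]; simp)]
    refine Finset.sum_congr rfl fun i _ => Finset.sum_congr rfl fun j _ => ?_
    have hvv : vecMulVec (μ j - μ i) (μ j) + vecMulVec (μ i - μ j) (μ i)
        = vecMulVec (μ j - μ i) (μ j - μ i) := by
      ext a b; simp [vecMulVec]; ring
    rw [mul_comm (χ j) (χ i), ← smul_add, ← hvv]
    congr 1
    rw [mul_add, add_mul]
  refine ⟨by rw [hG, key], ?_⟩
  rw [hG, key]
  apply posSemidef_smul_real _ (by positivity)
  refine Finset.sum_induction _ (fun A : Matrix (Fin m) (Fin m) ℝ => A.PosSemidef)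
    (fun a b ha hb => ha.add hb) Matrix.PosSemidef.zero fun i _ => ?_
  refine Finset.sum_induction _ (fun A : Matrix (Fin m) (Fin m) ℝ => A.PosSemidef)
    (fun a b ha hb => ha.add hb) Matrix.PosSemidef.zero fun j _ => ?_
  apply posSemidef_smul_real _ (mul_nonneg (hχ0 i) (hχ0 j))
  have := (posSemidef_vecMulVec' (μ j - μ i)).mul_mul_conjTranspose_same S⁻¹
  rwa [show (S⁻¹)ᴴ = S⁻¹ from hSinv.eq] at this
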